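/- Let ρ0 and ρ1 be n×n complex density matrices with a priori probabilities η0, η1 ≥ 0, η0 + η1 = 1, and let (E0, E1, E?) be a USD POVM for (ρ0, ρ1). Then Q0 = η0·Tr(E? ρ0) ≥ η0·Tr(P1 ρ0) and Q1 = η1·Tr(E? ρ1) ≥ η1·Tr(P0 ρ1), where P0 and P1 are the orthogonal projections onto the ranges of ρ0 and ρ1. -/

import Mathlib

open Matrix
open scoped ComplexOrder

/-- `P` is the orthogonal projection onto the range (support) of `A`. -/
def IsRangeProj {n : ℕ} (A P : Matrix (Fin n) (Fin n) ℂ) : Prop :=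
  P.IsHermitian ∧ P * P = P ∧
    LinearMap.range P.mulVecLin = LinearMap.range A.mulVecLin

section Aux

variable {n : ℕ}

open scoped MatrixOrder in
noncomputable def Matrix.PosSemidef.sqrt {A : Matrix (Fin n) (Fin n) ℂ} (_hA : A.PosSemidef) :
    Matrix (Fin n) (Fin n) ℂ :=
  CFC.sqrt A

open scoped MatrixOrder in
lemma Matrix.PosSemidef.sqrt_mul_self {A : Matrix (Fin n) (Fin n) ℂ} (hA : A.PosSemidef) :
    hA.sqrt * hA.sqrt = A :=
  CFC.sqrt_mul_sqrt_self A hA.nonneg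

open scoped MatrixOrder in
lemma Matrix.PosSemidef.posSemidef_sqrt {A : Matrix (Fin n) (Fin n) ℂ} (hA : A.PosSemidef) :
    hA.sqrt.PosSemidef :=
  (CFC.sqrt_nonneg A).posSemidef

lemma aux_diag_nonneg {M : Matrix (Fin n) (Fin n) ℂ} (hM : M.PosSemidef) (i : Fin n) :
    0 ≤ M i i := by
  exact hM.diag_nonneg

lemma aux_trace_nonneg {M : Matrix (Fin n) (Fin n) ℂ} (hM : M.PosSemidef) :
    0 ≤ M.trace := by
  rw [Matrix.trace]
  exact Finset.sum_nonneg fun i _ => aux_diag_nonneg hM i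

lemma aux_trace_mul_nonneg {A B : Matrix (Fin n) (Fin n) ℂ}
    (hA : A.PosSemidef) (hB : B.PosSemidef) : 0 ≤ (A * B).trace := by
  have h1 : (hA.sqrt * B * hA.sqrt).trace = (A * B).trace := by
    rw [Matrix.trace_mul_cycle, hA.sqrt_mul_self]
  rw [← h1]
  have h2 : Matrix.PosSemidef (hA.sqrtᴴ * B * hA.sqrt) :=
    hB.conjTranspose_mul_mul_same hA.sqrt
  rw [hA.posSemidef_sqrt.1.eq] at h2
  exact aux_trace_nonneg h2

lemma aux_eq_zero_of_trace_cTc (C : Matrix (Fin n) (Fin n) ℂ)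
    (h : (Cᴴ * C).trace = 0) : C = 0 := by
  have hof : (Cᴴ * C).trace = ((∑ j, ∑ i, Complex.normSq (C i j) : ℝ) : ℂ) := by
    push_cast
    rw [Matrix.trace]
    apply Finset.sum_congr rfl
    intro j _
    rw [Matrix.diag_apply, Matrix.mul_apply]
    apply Finset.sum_congr rfl
    intro i _
    rw [Matrix.conjTranspose_apply, Complex.star_def, ← Complex.normSq_eq_conj_mul_self]
  rw [hof] at h
  have hsum : ∑ j, ∑ i, Complex.normSq (C i j) = 0 := by exact_mod_cast h
  ext i j
  have h1 := (Finset.sum_eq_zero_iff_of_nonneg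
    (fun j _ => Finset.sum_nonneg fun i _ => Complex.normSq_nonneg (C i j))).mp hsum
    j (Finset.mem_univ j)
  have h2 := (Finset.sum_eq_zero_iff_of_nonneg
    (fun i _ => Complex.normSq_nonneg (C i j))).mp h1 i (Finset.mem_univ i)
  simpa using Complex.normSq_eq_zero.mp h2

lemma aux_mul_eq_zero_of_trace {A B : Matrix (Fin n) (Fin n) ℂ}
    (hA : A.PosSemidef) (hB : B.PosSemidef) (h : (A * B).trace = 0) : A * B = 0 := by
  have hC : (hB.sqrt * hA.sqrt)ᴴ * (hB.sqrt * hA.sqrt) = hA.sqrt * B * hA.sqrt := by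
    rw [conjTranspose_mul, hA.posSemidef_sqrt.1.eq, hB.posSemidef_sqrt.1.eq,
      Matrix.mul_assoc, ← Matrix.mul_assoc hB.sqrt hB.sqrt hA.sqrt, hB.sqrt_mul_self,
      Matrix.mul_assoc]
  have htr : ((hB.sqrt * hA.sqrt)ᴴ * (hB.sqrt * hA.sqrt)).trace = 0 := by
    rw [hC, Matrix.trace_mul_cycle, hA.sqrt_mul_self, h]
  have hTS : hB.sqrt * hA.sqrt = 0 := aux_eq_zero_of_trace_cTc _ htr
  have hBA : B * A = 0 := by
    have e : B * A = hB.sqrt * (hB.sqrt * hA.sqrt) * hA.sqrt := by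
      rw [Matrix.mul_assoc, Matrix.mul_assoc, hA.sqrt_mul_self,
        ← Matrix.mul_assoc, hB.sqrt_mul_self]
    rw [e, hTS, Matrix.mul_zero, Matrix.zero_mul]
  calc A * B = (B * A)ᴴ := by rw [conjTranspose_mul, hA.1.eq, hB.1.eq]
  _ = 0 := by rw [hBA]; simp

lemma aux_mul_proj_eq_zero {A ρ P : Matrix (Fin n) (Fin n) ℂ}
    (hP : IsRangeProj ρ P) (h : A * ρ = 0) : A * P = 0 := by
  ext i j
  have hcol : (A * P) *ᵥ Pi.single j 1 = 0 := by
    have hmem : P *ᵥ Pi.single j 1 ∈ LinearMap.range ρ.mulVecLin := by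
      rw [← hP.2.2]
      exact ⟨Pi.single j 1, rfl⟩
    obtain ⟨y, hy⟩ := hmem
    rw [← Matrix.mulVec_mulVec, ← show ρ *ᵥ y = P *ᵥ Pi.single j 1 from hy,
      Matrix.mulVec_mulVec, h]
    simp
  have := congrFun hcol i
  simpa [Matrix.mulVec_single] using this

lemma key_ineq {ρa ρb Ea P : Matrix (Fin n) (Fin n) ℂ}
    (hρa : ρa.PosSemidef) (hρb : ρb.PosSemidef)
    (hP : IsRangeProj ρb P) (hEa : Ea.PosSemidef)
    (hrest : (1 - Ea).PosSemidef) (husd : (Ea * ρb).trace = 0) :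
    (P * ρa).trace.re + (Ea * ρa).trace.re ≤ ρa.trace.re := by
  have hEρ : Ea * ρb = 0 := aux_mul_eq_zero_of_trace hEa hρb husd
  have hEP : Ea * P = 0 := aux_mul_proj_eq_zero hP hEρ
  have hPE : P * Ea = 0 := by
    calc P * Ea = (Ea * P)ᴴ := by rw [conjTranspose_mul, hEa.1.eq, hP.1.eq]
    _ = 0 := by rw [hEP]; simp
  have hDpsd : ((1 - P) - Ea).PosSemidef := by
    have h1 : ((1 - P)ᴴ * (1 - Ea) * (1 - P)).PosSemidef :=
      hrest.conjTranspose_mul_mul_same (1 - P)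
    have h2 : (1 - P)ᴴ = 1 - P := by
      rw [conjTranspose_sub, hP.1.eq]; simp
    rw [h2] at h1
    have h3 : (1 - P) * (1 - Ea) * (1 - P) = (1 - P) - Ea := by
      have hPP : P * P = P := hP.2.1
      simp only [Matrix.mul_sub, Matrix.sub_mul, Matrix.one_mul, Matrix.mul_one,
        hPP, hEP, hPE, sub_zero]
      abel
    rwa [h3] at h1
  have htr : 0 ≤ (((1 - P) - Ea) * ρa).trace := aux_trace_mul_nonneg hDpsd hρa
  have hexp : (((1 - P) - Ea) * ρa).trace = ρa.trace - (P * ρa).trace - (Ea * ρa).trace := by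
    simp [Matrix.sub_mul, Matrix.one_mul]
  rw [hexp] at htr
  have := (Complex.le_def.mp htr).1
  simp only [Complex.sub_re, Complex.zero_re] at this
  linarith

end Aux

/-- For any USD POVM, `Q0 ≥ η0·Tr(P1 ρ0)` and `Q1 ≥ η1·Tr(P0 ρ1)`. -/
theorem partial_failure_lower_bounds {n : ℕ}
    (ρ0 ρ1 E0 E1 Eq P0 P1 : Matrix (Fin n) (Fin n) ℂ)
    (hρ0 : ρ0.PosSemidef) (hρ0tr : ρ0.trace = 1)
    (hρ1 : ρ1.PosSemidef) (hρ1tr : ρ1.trace = 1)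
    (η0 η1 : ℝ) (hη0 : 0 ≤ η0) (hη1 : 0 ≤ η1) (hη : η0 + η1 = 1)
    (hP0 : IsRangeProj ρ0 P0) (hP1 : IsRangeProj ρ1 P1)
    (hE0 : E0.PosSemidef) (hE1 : E1.PosSemidef) (hEq : Eq.PosSemidef)
    (hsum : E0 + E1 + Eq = 1)
    (husd0 : (E0 * ρ1).trace = 0) (husd1 : (E1 * ρ0).trace = 0) :
    η0 * (P1 * ρ0).trace.re ≤ η0 * (Eq * ρ0).trace.re ∧
      η1 * (P0 * ρ1).trace.re ≤ η1 * (Eq * ρ1).trace.re := by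
  have hrest0 : ((1 : Matrix (Fin n) (Fin n) ℂ) - E0).PosSemidef := by
    have e : (1 : Matrix (Fin n) (Fin n) ℂ) - E0 = E1 + Eq := by rw [← hsum]; abel
    rw [e]; exact hE1.add hEq
  have hrest1 : ((1 : Matrix (Fin n) (Fin n) ℂ) - E1).PosSemidef := by
    have e : (1 : Matrix (Fin n) (Fin n) ℂ) - E1 = E0 + Eq := by rw [← hsum]; abel
    rw [e]; exact hE0.add hEq
  have hEq0 : Eq = 1 - E0 - E1 := by rw [← hsum]; abel
  have hEqρ0 : (Eq * ρ0).trace = ρ0.trace - (E0 * ρ0).trace - (E1 * ρ0).trace := by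
    rw [hEq0]; simp [Matrix.sub_mul, Matrix.one_mul]
  have hEqρ1 : (Eq * ρ1).trace = ρ1.trace - (E0 * ρ1).trace - (E1 * ρ1).trace := by
    rw [hEq0]; simp [Matrix.sub_mul, Matrix.one_mul]
  have h0 := key_ineq hρ0 hρ1 hP1 hE0 hrest0 husd0
  have h1 := key_ineq hρ1 hρ0 hP0 hE1 hrest1 husd1
  rw [hρ0tr] at h0
  rw [hρ1tr] at h1
  simp only [Complex.one_re] at h0 h1
  constructor
  · apply mul_le_mul_of_nonneg_left _ hη0
    rw [hEqρ0, husd1, hρ0tr]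
    simp only [Complex.sub_re, Complex.zero_re, Complex.one_re]
    linarith
  · apply mul_le_mul_of_nonneg_left _ hη1
    rw [hEqρ1, husd0, hρ1tr]
    simp only [Complex.sub_re, Complex.zero_re, Complex.one_re]
    linarith
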